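/- Let G be a graph with a cut vertex v, and let G' = G_v be obtained by completing the neighbourhood of v. Then C(G') = { S ∈ C(G) : v ∉ S }, where C(G) denotes the collection of subsets S ⊆ V(G) such that S = ∅ or removing any vertex v from S strictly decreases the number of connected components of G \ S (i.e. c(S \ {w}) < c(S) for all w ∈ S). -/

import Mathlib

set_option linter.unusedSectionVars false

variable {V : Type} [Fintype V] [DecidableEq V]

/-- The number of connected components of the induced subgraph of `G` on `A`. -/
noncomputable def comps (G : SimpleGraph V) (A : Set V) : ℕ :=
  Nat.card ((G.induce A).ConnectedComponent)

/-- `v` is a cut vertex of `G`. -/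
def CutVertex (G : SimpleGraph V) (v : V) : Prop :=
  Nat.card G.ConnectedComponent < comps G {v}ᶜ

/-- `G_v`: the graph obtained from `G` by completing the neighbourhood of `v`. -/
def completeNbhd (G : SimpleGraph V) (v : V) : SimpleGraph V :=
  G ⊔ SimpleGraph.fromRel (fun a b => G.Adj v a ∧ G.Adj v b)

/-- `C(G)` for the graph `G` restricted to ground vertex set `W`: the sets `S ⊆ W` which are
empty or such that adding back any vertex of `S` strictly reconnects components. -/
def cutSets (G : SimpleGraph V) (W : Set V) : Set (Set V) :=
  {S | S ⊆ W ∧ (S = ∅ ∨ ∀ w ∈ S, comps G (W \ (S \ {w})) < comps G (W \ S))}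

lemma completeNbhd_adj (G : SimpleGraph V) (v a b : V) :
    (completeNbhd G v).Adj a b ↔ G.Adj a b ∨ (a ≠ b ∧ G.Adj v a ∧ G.Adj v b) := by
  simp only [completeNbhd, SimpleGraph.sup_adj, SimpleGraph.fromRel_adj]
  tauto

lemma completeNbhd_adj_v (G : SimpleGraph V) (v a : V) :
    (completeNbhd G v).Adj v a ↔ G.Adj v a := by
  rw [completeNbhd_adj]
  have := G.irrefl (v := v)
  tauto

/-- Reachability in the induced completed graph implies reachability in induced `G`,
when `v ∈ A`. -/
lemma reach_of_complete (G : SimpleGraph V) (v : V) (A : Set V) (hvA : v ∈ A)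
    {x y : ↥A} (p : ((completeNbhd G v).induce A).Walk x y) :
    (G.induce A).Reachable x y := by
  induction p with
  | nil => exact SimpleGraph.Reachable.refl _
  | @cons a c b h p ih =>
    refine SimpleGraph.Reachable.trans ?_ ih
    have h' : (completeNbhd G v).Adj (a : V) (c : V) := h
    rcases (completeNbhd_adj G v _ _).1 h' with h1 | ⟨hne, h2, h3⟩
    · exact (show (G.induce A).Adj a c from h1).reachable
    · exact ((show (G.induce A).Adj a ⟨v, hvA⟩ from h2.symm).reachable).trans
        (show (G.induce A).Adj ⟨v, hvA⟩ c from h3).reachable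

lemma reachable_iff_complete (G : SimpleGraph V) (v : V) (A : Set V) (hvA : v ∈ A)
    (x y : ↥A) :
    (G.induce A).Reachable x y ↔ ((completeNbhd G v).induce A).Reachable x y := by
  constructor
  · intro h
    refine h.mono ?_
    intro a b hab
    exact (completeNbhd_adj G v _ _).2 (Or.inl hab)
  · intro ⟨p⟩
    exact reach_of_complete G v A hvA p

lemma comps_completeNbhd (G : SimpleGraph V) (v : V) (A : Set V) (hvA : v ∈ A) :
    comps (completeNbhd G v) A = comps G A := by
  apply Nat.card_congr
  exact ⟨Quot.map id (fun a b hab => ((reachable_iff_complete G v A hvA a b)).2 hab),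
    Quot.map id (fun a b hab => ((reachable_iff_complete G v A hvA a b)).1 hab),
    by rintro ⟨a⟩; rfl, by rintro ⟨a⟩; rfl⟩

/-- If the neighbours of `v` form a clique in `H`, walks in `H` induced on `A ∪ {v}`
between vertices of `A` can avoid `v`. -/
lemma reach_avoid (H : SimpleGraph V) (v : V) (A : Set V)
    (hcl : ∀ a b : V, H.Adj v a → H.Adj v b → a ≠ b → H.Adj a b) :
    ∀ (n : ℕ) (x y : ↥(A ∪ {v} : Set V)) (p : (H.induce (A ∪ {v} : Set V)).Walk x y),
      p.length ≤ n → ∀ (hx : (x : V) ∈ A) (hy : (y : V) ∈ A),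
      (H.induce A).Reachable ⟨x, hx⟩ ⟨y, hy⟩ := by
  intro n
  induction n with
  | zero =>
    intro x y p hp hx hy
    cases p with
    | nil => exact SimpleGraph.Reachable.refl _
    | cons h q => simp at hp
  | succ n ih =>
    intro x y p hp hx hy
    cases p with
    | nil => exact SimpleGraph.Reachable.refl _
    | @cons _ c _ h q =>
      by_cases hc : (c : V) ∈ A
      · have h' : (H.induce A).Adj ⟨x, hx⟩ ⟨c, hc⟩ := h
        have hq : q.length ≤ n := by
          have : q.length + 1 ≤ n + 1 := by simpa using hp
          omega
        exact h'.reachable.trans (ih c y q hq hc hy)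
      · have hcv : (c : V) = v := by
          rcases c.2 with h1 | h1
          · exact absurd h1 hc
          · exact h1
        cases q with
        | nil => exact absurd (hcv ▸ hy) (by simp_all)
        | @cons _ d _ h2 q2 =>
          have hd : (d : V) ∈ A := by
            rcases d.2 with h1 | h1
            · exact h1
            · exfalso
              have : (c : V) ≠ (d : V) := (SimpleGraph.Adj.ne h2 : c ≠ d) ∘ Subtype.ext
              exact this (hcv.trans h1.symm)
          have hq2 : q2.length ≤ n := by
            have : q2.length + 2 ≤ n + 1 := by simpa [Nat.add_assoc] using hp
            omega
          have tail := ih d y q2 hq2 hd hy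
          by_cases hxd : (x : V) = (d : V)
          · have : (⟨(x:V), hx⟩ : ↥A) = ⟨(d:V), hd⟩ := Subtype.ext hxd
            rwa [this]
          · have hxv : H.Adj v (x : V) := by
              have : H.Adj (x : V) (c : V) := h
              rw [hcv] at this
              exact this.symm
            have hdv : H.Adj v (d : V) := by
              have : H.Adj (c : V) (d : V) := h2
              rwa [hcv] at this
            have hadj : (H.induce A).Adj ⟨x, hx⟩ ⟨d, hd⟩ := hcl _ _ hxv hdv hxd
            exact hadj.reachable.trans tail

/-- Adding `v` back cannot decrease the number of components, when the neighbours of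
`v` form a clique. -/
lemma comps_le_insert (H : SimpleGraph V) (v : V) (A : Set V)
    (hcl : ∀ a b : V, H.Adj v a → H.Adj v b → a ≠ b → H.Adj a b) :
    comps H A ≤ comps H (A ∪ {v}) := by
  classical
  have hsub : A ⊆ A ∪ {v} := Set.subset_union_left
  let f : H.induce A →g H.induce (A ∪ {v} : Set V) :=
    ⟨fun x => ⟨x.1, hsub x.2⟩, fun {a b} hab => hab⟩
  apply Nat.card_le_card_of_injective (SimpleGraph.ConnectedComponent.map f)
  intro c1 c2 hc
  induction c1 using SimpleGraph.ConnectedComponent.ind with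
  | _ a =>
  induction c2 using SimpleGraph.ConnectedComponent.ind with
  | _ b =>
  simp only [SimpleGraph.ConnectedComponent.map_mk] at hc
  obtain ⟨p⟩ := SimpleGraph.ConnectedComponent.exact hc
  apply SimpleGraph.ConnectedComponent.sound
  have := reach_avoid H v A hcl p.length _ _ p le_rfl a.2 b.2
  exact this

lemma completeNbhd_clique (G : SimpleGraph V) (v : V) :
    ∀ a b : V, (completeNbhd G v).Adj v a → (completeNbhd G v).Adj v b → a ≠ b →
      (completeNbhd G v).Adj a b := by
  intro a b ha hb hab
  rw [completeNbhd_adj_v] at ha hb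
  exact (completeNbhd_adj G v a b).2 (Or.inr ⟨hab, ha, hb⟩)

/-- For a cut vertex `v` of `G` and `G' = G_v`,
`C(G') = { S ∈ C(G) : v ∉ S }`. -/
theorem cutSets_completeNbhd
    (G : SimpleGraph V) (v : V) (hv : CutVertex G v) :
    cutSets (completeNbhd G v) Set.univ = {S ∈ cutSets G Set.univ | v ∉ S} := by
  classical
  ext S
  simp only [cutSets, Set.mem_setOf_eq, Set.mem_sep_iff, Set.subset_univ, true_and]
  constructor
  · rintro (rfl | hS)
    · exact ⟨Or.inl rfl, by simp⟩
    · have hvS : v ∉ S := by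
        intro hvmem
        have h1 := hS v hvmem
        have heq : Set.univ \ (S \ {v}) = (Set.univ \ S) ∪ {v} := by
          ext x
          by_cases hxv : x = v <;> simp [hxv, hvmem]
        rw [heq] at h1
        have h2 := comps_le_insert (completeNbhd G v) v (Set.univ \ S)
          (completeNbhd_clique G v)
        omega
      refine ⟨Or.inr fun w hw => ?_, hvS⟩
      have hv1 : v ∈ Set.univ \ (S \ {w}) := by simp [hvS]
      have hv2 : v ∈ Set.univ \ S := by simp [hvS]
      rw [← comps_completeNbhd G v _ hv1, ← comps_completeNbhd G v _ hv2]
      exact hS w hw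
  · rintro ⟨rfl | hS, hvS⟩
    · exact Or.inl rfl
    · refine Or.inr fun w hw => ?_
      have hv1 : v ∈ Set.univ \ (S \ {w}) := by simp [hvS]
      have hv2 : v ∈ Set.univ \ S := by simp [hvS]
      rw [comps_completeNbhd G v _ hv1, comps_completeNbhd G v _ hv2]
      exact hS w hw
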